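/- Let k be a field, S = k[x_1,…,x_N] a polynomial ring, D = k[t]/(t²) and S' = S[t]/(t²). Let I ⊆ S be an ideal and I' ⊆ S' an ideal whose image under the reduction map S' → S, t ↦ 0, equals I. Let φ : S^p → I be a surjective S-module homomorphism and φ' : (S')^p → I' a surjective S'-module homomorphism whose reduction modulo t is φ. Then I' is a first order deformation of I (i.e., S'/I' is flat as a D-module and (S'/I') ⊗_D k ≅ S/I) if and only if every element of ker(φ) is the image, under reduction modulo t, of some element of ker(φ'); that is, if and only if every relation of I lifts to a relation of I'. -/

import Mathlib

/-!
Statement 0: Relation-lifting criterion for first order deformations.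
`S = k[x₁,…,x_N]`, `D = k[t]/(t²)`, `S' = S[t]/(t²) = D[x₁,…,x_N]`.
An ideal `I' ⊆ S'` reducing to `I ⊆ S` is a first order deformation of `I`
(i.e. `S'/I'` is `D`-flat and reduces to `S/I`) iff every relation of `I`
lifts to a relation of `I'`.
-/

open MvPolynomial

noncomputable section

/-- The dual numbers `D = k[t]/(t²)`. -/
def DD (k : Type) [Field k] : Type := Polynomial k ⧸ (Ideal.span {(Polynomial.X : Polynomial k)^2})

instance (k : Type) [Field k] : CommRing (DD k) := Ideal.Quotient.commRing _
instance (k : Type) [Field k] : Algebra k (DD k) := Ideal.Quotient.algebra k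

/-- The ring `S' = S[t]/(t²) = D[xᵢ]`, for variables indexed by `σ`. -/
def SP (k : Type) [Field k] (σ : Type) : Type := MvPolynomial σ (DD k)

noncomputable instance (k : Type) [Field k] (σ : Type) : CommRing (SP k σ) :=
  inferInstanceAs (CommRing (MvPolynomial σ (DD k)))
noncomputable instance (k : Type) [Field k] (σ : Type) : Algebra (DD k) (SP k σ) :=
  inferInstanceAs (Algebra (DD k) (MvPolynomial σ (DD k)))

/-- The reduction `k[t]/(t²) → k`, `t ↦ 0`. -/
def DDred (k : Type) [Field k] : DD k →+* k :=
  Ideal.Quotient.lift _ (Polynomial.evalRingHom 0)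
    (by
      intro a ha
      have h : Ideal.span {(Polynomial.X : Polynomial k)^2} ≤
          RingHom.ker (Polynomial.evalRingHom (0:k)) := by
        rw [Ideal.span_le]
        intro x hx
        simp only [Set.mem_singleton_iff] at hx
        subst hx
        simp [RingHom.mem_ker]
      simpa [RingHom.mem_ker] using h ha)

/-- The reduction map `S' → S`, `t ↦ 0`. -/
def red (k : Type) [Field k] (σ : Type) : SP k σ →+* MvPolynomial σ k :=
  MvPolynomial.map (DDred k)

/-- `I' ⊆ S'` is a first order deformation of `I ⊆ S` :
`S'/I'` is flat over the dual numbers `D = k[t]/(t²)` and the image of `I'` under the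
reduction map `S' → S`, `t ↦ 0`, is `I` (so that `(S'/I') ⊗_D k ≅ S/I`). -/
def IsFOD (k : Type) [Field k] (σ : Type) (I : Ideal (MvPolynomial σ k))
    (I' : Ideal (SP k σ)) : Prop :=
  Module.Flat (DD k) (SP k σ ⧸ I') ∧ Ideal.map (red k σ) I' = I


/-! ### Auxiliary material -/

section Aux

open TensorProduct

variable (k : Type) [Field k]

/-- The class of `t` in the dual numbers. -/
def tD : DD k := Ideal.Quotient.mk _ Polynomial.X

/-- The element `t` viewed in `S' = S[t]/(t²)`. -/
def tS (σ : Type) : SP k σ := MvPolynomial.C (tD k)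

lemma tD_sq : tD k * tD k = 0 := by
  show (Ideal.Quotient.mk (Ideal.span {(Polynomial.X : Polynomial k)^2})
    (Polynomial.X * Polynomial.X) : DD k) = 0
  rw [Ideal.Quotient.eq_zero_iff_mem, ← pow_two]
  exact Ideal.subset_span rfl

lemma DDred_mk (P : Polynomial k) :
    DDred k (Ideal.Quotient.mk _ P) = Polynomial.eval 0 P :=
  Ideal.Quotient.lift_mk _ _ _

lemma DDred_tD : DDred k (tD k) = 0 := by
  rw [tD, DDred_mk, Polynomial.eval_X]

lemma DDred_algebraMap (c : k) : DDred k (algebraMap k (DD k) c) = c := by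
  have : algebraMap k (DD k) c =
      Ideal.Quotient.mk _ (algebraMap k (Polynomial k) c) := rfl
  rw [this, DDred_mk, Polynomial.algebraMap_eq, Polynomial.eval_C]

lemma ker_DDred : RingHom.ker (DDred k) = Ideal.span {tD k} := by
  apply le_antisymm
  · intro a ha
    obtain ⟨P, rfl⟩ := Ideal.Quotient.mk_surjective a
    replace ha : DDred k (Ideal.Quotient.mk _ P) = 0 := ha
    rw [DDred_mk] at ha
    have hd : Polynomial.X ∣ P := Polynomial.X_dvd_iff.mpr
      (by rwa [Polynomial.coeff_zero_eq_eval_zero])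
    obtain ⟨Q, rfl⟩ := hd
    rw [map_mul]
    exact Ideal.mem_span_singleton'.mpr ⟨Ideal.Quotient.mk _ Q, mul_comm _ _⟩
  · rw [Ideal.span_le, Set.singleton_subset_iff]
    exact RingHom.mem_ker.mpr (DDred_tD k)

lemma DDred_eq_zero_of_tD_mul (a : DD k) (h : tD k * a = 0) : DDred k a = 0 := by
  obtain ⟨P, rfl⟩ := Ideal.Quotient.mk_surjective a
  have h' : Polynomial.X * P ∈ Ideal.span {(Polynomial.X : Polynomial k) ^ 2} := by
    rw [← Ideal.Quotient.eq_zero_iff_mem, map_mul]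
    exact h
  obtain ⟨Q, hQ⟩ := Ideal.mem_span_singleton.mp h'
  rw [pow_two, mul_assoc] at hQ
  have hP : P = Polynomial.X * Q := mul_left_cancel₀ Polynomial.X_ne_zero hQ
  subst hP
  rw [DDred_mk, Polynomial.eval_mul, Polynomial.eval_X, zero_mul]

lemma exists_of_tD_mul (a : DD k) (h : tD k * a = 0) : ∃ b, a = tD k * b := by
  have := DDred_eq_zero_of_tD_mul k a h
  have ha : a ∈ Ideal.span {tD k} := by
    rw [← ker_DDred]; exact RingHom.mem_ker.mpr this
  obtain ⟨c, hc⟩ := Ideal.mem_span_singleton'.mp ha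
  exact ⟨c, by rw [← hc, mul_comm]⟩

lemma isUnit_of_DDred_ne_zero {a : DD k} (h : DDred k a ≠ 0) : IsUnit a := by
  have h1 : a - algebraMap k (DD k) (DDred k a) ∈ RingHom.ker (DDred k) := by
    simp [RingHom.mem_ker, DDred_algebraMap]
  rw [ker_DDred] at h1
  obtain ⟨c, hc⟩ := Ideal.mem_span_singleton'.mp h1
  have hnil : IsNilpotent (a - algebraMap k (DD k) (DDred k a)) := by
    refine ⟨2, ?_⟩
    rw [← hc]
    have : (c * tD k) ^ 2 = c ^ 2 * (tD k * tD k) := by ring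
    rw [this, tD_sq, mul_zero]
  have hu : IsUnit (algebraMap k (DD k) (DDred k a)) :=
    (isUnit_iff_ne_zero.mpr h).map _
  have := hnil.isUnit_add_right_of_commute hu (Commute.all _ _)
  simpa using this

lemma ideal_cases (J : Ideal (DD k)) : J = ⊥ ∨ J = Ideal.span {tD k} ∨ J = ⊤ := by
  by_cases h1 : ∃ a ∈ J, DDred k a ≠ 0
  · obtain ⟨a, haJ, ha⟩ := h1
    exact Or.inr (Or.inr (Ideal.eq_top_of_isUnit_mem J haJ (isUnit_of_DDred_ne_zero k ha)))
  push_neg at h1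
  have hJ : J ≤ Ideal.span {tD k} := by
    intro a haJ
    rw [← ker_DDred]
    exact RingHom.mem_ker.mpr (h1 a haJ)
  by_cases h2 : ∃ a ∈ J, a ≠ 0
  · obtain ⟨a, haJ, ha⟩ := h2
    obtain ⟨c, hc⟩ := Ideal.mem_span_singleton'.mp (hJ haJ)
    have hc0 : DDred k c ≠ 0 := by
      intro h0
      apply ha
      have hcm : c ∈ Ideal.span {tD k} := by
        rw [← ker_DDred]; exact RingHom.mem_ker.mpr h0
      obtain ⟨d, hd⟩ := Ideal.mem_span_singleton'.mp hcm
      rw [← hc, ← hd]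
      calc d * tD k * tD k = d * (tD k * tD k) := by ring
        _ = 0 := by rw [tD_sq, mul_zero]
    obtain ⟨u, hu⟩ := isUnit_of_DDred_ne_zero k hc0
    refine Or.inr (Or.inl (le_antisymm hJ ?_))
    rw [Ideal.span_singleton_le_iff_mem]
    have htd : tD k = ↑u⁻¹ * a := by
      rw [← hc, ← hu, ← mul_assoc, Units.inv_mul, one_mul]
    rw [htd]
    exact Ideal.mul_mem_left J _ haJ
  · push_neg at h2
    exact Or.inl ((Submodule.eq_bot_iff J).mpr h2)

/-- The flatness criterion over the dual numbers: `M` is flat iff the annihilator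
of `t` in `M` is `t • M`. -/
theorem flat_iff_tD (M : Type) [AddCommGroup M] [Module (DD k) M] :
    Module.Flat (DD k) M ↔ ∀ m : M, tD k • m = 0 → ∃ n, m = tD k • n := by
  constructor
  · intro hflat m hm
    have h0 : ∑ i : Fin 1, (fun _ : Fin 1 => tD k) i • (fun _ : Fin 1 => m) i = 0 := by
      simpa using hm
    obtain ⟨κ, a, y, hx, ha⟩ :=
      Module.Flat.isTrivialRelation_of_sum_smul_eq_zero (R := DD k) (M := M) h0
    have ha' : ∀ j, tD k * a 0 j = 0 := by
      intro j
      simpa using ha j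
    choose c hc using fun j => exists_of_tD_mul k (a 0 j) (ha' j)
    refine ⟨∑ j, c j • y j, ?_⟩
    calc m = ∑ j, a 0 j • y j := hx 0
      _ = ∑ j, (tD k * c j) • y j := by
          refine Finset.sum_congr rfl fun j _ => ?_
          rw [← hc j]
      _ = tD k • ∑ j, c j • y j := by
          rw [Finset.smul_sum]
          refine Finset.sum_congr rfl fun j _ => ?_
          rw [← smul_eq_mul, smul_assoc]
  · intro h
    rw [Module.Flat.iff_rTensor_injective']
    intro J
    rcases ideal_cases k J with rfl | rfl | rfl
    · -- J = ⊥
      have hz : ∀ u : (⊥ : Ideal (DD k)) ⊗[DD k] M, u = 0 := by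
        intro u
        induction u with
        | zero => rfl
        | tmul a m =>
          obtain ⟨a, ha⟩ := a
          have ha0 : a = 0 := ha
          subst ha0
          rw [show (⟨0, ha⟩ : (⊥ : Ideal (DD k))) = 0 from rfl, TensorProduct.zero_tmul]
        | add x y hx hy => rw [hx, hy, add_zero]
      intro z w _
      rw [hz z, hz w]
    · -- J = span {t}
      set τ' : (Ideal.span {tD k} : Ideal (DD k)) := ⟨tD k, Ideal.subset_span rfl⟩ with hτ'
      have hgen : ∀ z : (Ideal.span {tD k} : Ideal (DD k)) ⊗[DD k] M,
          ∃ m, z = τ' ⊗ₜ[DD k] m := by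
        intro z
        induction z with
        | zero => exact ⟨0, (TensorProduct.tmul_zero _ _).symm⟩
        | tmul a m =>
          obtain ⟨c, hc⟩ := Ideal.mem_span_singleton'.mp a.2
          have ha : a = c • τ' := by
            apply Subtype.ext
            rw [Submodule.coe_smul]
            show (a : DD k) = c • tD k
            rw [smul_eq_mul, hc]
          refine ⟨c • m, ?_⟩
          rw [ha, TensorProduct.smul_tmul]
        | add x y hx hy =>
          obtain ⟨m₁, rfl⟩ := hx
          obtain ⟨m₂, rfl⟩ := hy
          exact ⟨m₁ + m₂, (TensorProduct.tmul_add _ _ _).symm⟩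
      rw [injective_iff_map_eq_zero]
      intro z hz
      obtain ⟨m, rfl⟩ := hgen z
      have h1 : (TensorProduct.lid (DD k) M)
          (LinearMap.rTensor M (Submodule.subtype _) (τ' ⊗ₜ[DD k] m)) = tD k • m := by
        rw [LinearMap.rTensor_tmul]
        simp
        rfl
      rw [hz, map_zero] at h1
      obtain ⟨n, hn⟩ := h m h1.symm
      rw [hn, TensorProduct.tmul_smul, TensorProduct.smul_tmul', show
          tD k • τ' = (0 : (Ideal.span {tD k} : Ideal (DD k))) from
          Subtype.ext (by rw [Submodule.coe_smul]; exact (smul_eq_mul _ _).trans (tD_sq k)),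
        TensorProduct.zero_tmul]
    · -- J = ⊤
      set g : DD k →ₗ[DD k] (⊤ : Ideal (DD k)) :=
        LinearMap.codRestrict (⊤ : Ideal (DD k)) LinearMap.id (fun _ => trivial) with hg
      have hcomp : g ∘ₗ Submodule.subtype (⊤ : Ideal (DD k)) = LinearMap.id := by
        apply LinearMap.ext
        intro x
        exact Subtype.ext rfl
      have : Function.LeftInverse (LinearMap.rTensor M g)
          (LinearMap.rTensor M (Submodule.subtype (⊤ : Ideal (DD k)))) := by
        intro z
        rw [← LinearMap.comp_apply, ← LinearMap.rTensor_comp, hcomp, LinearMap.rTensor_id,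
          LinearMap.id_apply]
      exact this.injective

end Aux


section Aux2

variable (k : Type) [Field k] (σ : Type)

lemma red_tS : red k σ (tS k σ) = 0 := by
  show MvPolynomial.map (DDred k) (MvPolynomial.C (tD k)) = 0
  rw [MvPolynomial.map_C, DDred_tD, map_zero]

lemma tS_sq : tS k σ * tS k σ = 0 := by
  show (MvPolynomial.C (tD k) : MvPolynomial σ (DD k)) * MvPolynomial.C (tD k) = 0
  exact (map_mul (MvPolynomial.C : DD k →+* MvPolynomial σ (DD k)) _ _).symm.trans
    (by rw [tD_sq, map_zero]; rfl)

lemma ker_red : RingHom.ker (red k σ) = Ideal.span {tS k σ} := by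
  show RingHom.ker (MvPolynomial.map (DDred k) :
      MvPolynomial σ (DD k) →+* MvPolynomial σ k) = Ideal.span {MvPolynomial.C (tD k)}
  rw [MvPolynomial.ker_map, ker_DDred, Ideal.map_span, Set.image_singleton]

lemma exists_of_red_eq_zero (f : SP k σ) (hf : red k σ f = 0) : ∃ g, f = tS k σ * g := by
  have hm : f ∈ RingHom.ker (red k σ) := RingHom.mem_ker.mpr hf
  rw [ker_red] at hm
  obtain ⟨g, hg⟩ := Ideal.mem_span_singleton'.mp hm
  exact ⟨g, by rw [← hg, mul_comm]⟩

lemma red_eq_zero_of_tS_mul (f : MvPolynomial σ (DD k))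
    (h : MvPolynomial.C (tD k) * f = 0) : red k σ f = 0 := by
  show MvPolynomial.map (DDred k) f = 0
  apply MvPolynomial.ext
  intro m
  rw [MvPolynomial.coeff_map, MvPolynomial.coeff_zero]
  apply DDred_eq_zero_of_tD_mul
  have hc := congrArg (MvPolynomial.coeff m) h
  rwa [MvPolynomial.coeff_C_mul, MvPolynomial.coeff_zero] at hc

lemma exists_of_tS_mul (f : SP k σ) (h : tS k σ * f = 0) : ∃ g, f = tS k σ * g :=
  exists_of_red_eq_zero k σ f (red_eq_zero_of_tS_mul k σ f h)

lemma red_L (f : MvPolynomial σ k) :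
    red k σ (MvPolynomial.map (algebraMap k (DD k)) f) = f := by
  show MvPolynomial.map (DDred k) (MvPolynomial.map (algebraMap k (DD k)) f) = f
  rw [MvPolynomial.map_map, show (DDred k).comp (algebraMap k (DD k)) = RingHom.id k
    from RingHom.ext (DDred_algebraMap k), MvPolynomial.map_id]

lemma smul_mk (I' : Ideal (SP k σ)) (f : SP k σ) :
    tD k • (Ideal.Quotient.mk I' f) = Ideal.Quotient.mk I' (tS k σ * f) := by
  rw [Algebra.smul_def, ← Ideal.Quotient.mk_algebraMap, ← map_mul]
  rfl

end Aux2

theorem statement0 (k : Type) [Field k] (N p : ℕ)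
    (I : Ideal (MvPolynomial (Fin N) k)) (I' : Ideal (SP k (Fin N)))
    (hred : Ideal.map (red k (Fin N)) I' = I)
    (φ : (Fin p → MvPolynomial (Fin N) k) →ₗ[MvPolynomial (Fin N) k] MvPolynomial (Fin N) k)
    (hφ : LinearMap.range φ = I)
    (φ' : (Fin p → SP k (Fin N)) →ₗ[SP k (Fin N)] SP k (Fin N))
    (hφ' : LinearMap.range φ' = I')
    (hcompat : ∀ v : Fin p → SP k (Fin N),
      red k (Fin N) (φ' v) = φ (fun i => red k (Fin N) (v i))) :
    IsFOD k (Fin N) I I' ↔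
      ∀ r : Fin p → MvPolynomial (Fin N) k, φ r = 0 →
        ∃ r' : Fin p → SP k (Fin N), φ' r' = 0 ∧ (fun i => red k (Fin N) (r' i)) = r := by
  classical
  have hker := exists_of_red_eq_zero k (Fin N)
  constructor
  · rintro ⟨hflat, -⟩ r hr
    set r₀ : Fin p → SP k (Fin N) :=
      fun i => MvPolynomial.map (algebraMap k (DD k)) (r i) with hr₀
    have hredr₀ : (fun i => red k (Fin N) (r₀ i)) = r := by
      funext i; exact red_L k (Fin N) (r i)
    have h1 : red k (Fin N) (φ' r₀) = 0 := by
      rw [hcompat, hredr₀, hr]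
    obtain ⟨f, hf⟩ := hker _ h1
    have hfI : tS k (Fin N) * f ∈ I' := by
      rw [← hf, ← hφ']
      exact ⟨r₀, rfl⟩
    have h2 : tD k • Ideal.Quotient.mk I' f = 0 := by
      rw [smul_mk, Ideal.Quotient.eq_zero_iff_mem]
      exact hfI
    obtain ⟨n, hn⟩ := (flat_iff_tD k _).mp hflat _ h2
    obtain ⟨g, rfl⟩ := Ideal.Quotient.mk_surjective n
    rw [smul_mk] at hn
    have h3 : f - tS k (Fin N) * g ∈ I' := Ideal.Quotient.eq.mp hn
    rw [← hφ'] at h3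
    obtain ⟨w, hw⟩ := h3
    refine ⟨fun i => r₀ i - tS k (Fin N) * w i, ?_, ?_⟩
    · have heq : (fun i => r₀ i - tS k (Fin N) * w i) = r₀ - tS k (Fin N) • w := by
        funext i
        simp [Pi.sub_apply, Pi.smul_apply, smul_eq_mul]
      rw [heq, map_sub, map_smul, smul_eq_mul, hw, hf, mul_sub, sub_sub_cancel,
        ← mul_assoc, tS_sq, zero_mul]
    · funext i
      rw [map_sub, map_mul, red_tS, zero_mul, sub_zero]
      exact red_L k (Fin N) (r i)
  · intro hlift
    refine ⟨(flat_iff_tD k _).mpr ?_, hred⟩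
    intro m hm
    obtain ⟨f, rfl⟩ := Ideal.Quotient.mk_surjective m
    rw [smul_mk, Ideal.Quotient.eq_zero_iff_mem, ← hφ'] at hm
    obtain ⟨v, hv⟩ := hm
    have h1 : φ (fun i => red k (Fin N) (v i)) = 0 := by
      rw [← hcompat, hv, map_mul, red_tS, zero_mul]
    obtain ⟨v', hv'0, hv'red⟩ := hlift _ h1
    choose w hw using fun i => hker (v i - v' i)
      (by rw [map_sub, congrFun hv'red i, sub_self])
    have h2 : tS k (Fin N) * f = tS k (Fin N) * φ' w := by
      have heq : v - v' = tS k (Fin N) • w := by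
        funext i
        simp only [Pi.sub_apply, Pi.smul_apply, smul_eq_mul]
        exact hw i
      calc tS k (Fin N) * f = φ' v - φ' v' := by rw [hv, hv'0, sub_zero]
        _ = φ' (v - v') := (map_sub φ' v v').symm
        _ = tS k (Fin N) * φ' w := by rw [heq, map_smul, smul_eq_mul]
    have h3 : tS k (Fin N) * (f - φ' w) = 0 := by
      rw [mul_sub, h2, sub_self]
    obtain ⟨g, hg⟩ := exists_of_tS_mul k (Fin N) _ h3
    refine ⟨Ideal.Quotient.mk I' g, ?_⟩
    rw [smul_mk, Ideal.Quotient.eq]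
    have : f - tS k (Fin N) * g = φ' w := by
      rw [← hg]; ring
    rw [this, ← hφ']
    exact ⟨w, rfl⟩


end
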